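/- arXiv:2004.11183 — 2 statements merged into one kernel-verified Lean document; each statement's English description precedes it below -/
import Mathlib

section
/- For α ∈ (0,1), x', y' ∈ ℝ² with |x'| = R > 0 and |y'| ≤ R/2, there exists a constant C > 0 (independent of x', y', R) such that | (x'·y'^⊥)/|x'| · (|x'|^{α+2} - |x'-y'|^{α+2}) / (|x'-y'|^{α+2} |x'|^{α+2}) | ≤ C |y'|² / R^{α+3}, where y'^⊥ = (y'₂, -y'₁). -/
open Real Set

lemma rpow_sub_rpow_le {p a b : ℝ} (hp : 1 ≤ p) (hb : 0 ≤ b) (hba : b ≤ a) :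
    a ^ p - b ^ p ≤ p * a ^ (p - 1) * (a - b) := by
  rcases eq_or_lt_of_le hba with rfl | h
  · simp
  · obtain ⟨c, hc, hcd⟩ := exists_hasDerivAt_eq_slope (fun x : ℝ => x ^ p)
      (fun x => p * x ^ (p - 1)) h
      (by
        apply ContinuousOn.rpow_const continuousOn_id
        intro x hx
        rcases eq_or_ne x 0 with rfl | hx0
        · exact Or.inr (by linarith)
        · exact Or.inl hx0)
      (fun x hx => Real.hasDerivAt_rpow_const (Or.inr hp))
    have hc0 : 0 ≤ c := le_trans hb hc.1.le
    rw [eq_div_iff (by linarith : a - b ≠ 0)] at hcd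
    rw [show a ^ p - b ^ p = p * c ^ (p - 1) * (a - b) from hcd.symm]
    have h1 : c ^ (p - 1) ≤ a ^ (p - 1) :=
      Real.rpow_le_rpow hc0 hc.2.le (by linarith)
    have hp0 : (0:ℝ) ≤ p := by linarith
    have := mul_le_mul_of_nonneg_left h1 hp0
    exact mul_le_mul_of_nonneg_right this (by linarith)

lemma abs_rpow_sub_rpow_le {p a b M : ℝ} (hp : 1 ≤ p) (ha : 0 ≤ a) (hb : 0 ≤ b)
    (haM : a ≤ M) (hbM : b ≤ M) : |a ^ p - b ^ p| ≤ p * M ^ (p - 1) * |a - b| := by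
  have hM : 0 ≤ M := le_trans ha haM
  rcases le_total b a with h | h
  · rw [abs_of_nonneg (sub_nonneg.2 (Real.rpow_le_rpow hb h (by linarith))),
      abs_of_nonneg (sub_nonneg.2 h)]
    calc a ^ p - b ^ p ≤ p * a ^ (p - 1) * (a - b) := rpow_sub_rpow_le hp hb h
      _ ≤ p * M ^ (p - 1) * (a - b) := by
          gcongr <;> linarith
  · rw [abs_of_nonpos (sub_nonpos.2 (Real.rpow_le_rpow ha h (by linarith))),
      abs_of_nonpos (sub_nonpos.2 h), neg_sub, neg_sub]
    calc b ^ p - a ^ p ≤ p * b ^ (p - 1) * (b - a) := rpow_sub_rpow_le hp ha h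
      _ ≤ p * M ^ (p - 1) * (b - a) := by
          gcongr <;> linarith

/-- The perpendicular vector `y'^⊥ = (y'₂, -y'₁)` in `ℝ²`. -/
noncomputable def perp (v : EuclideanSpace ℝ (Fin 2)) : EuclideanSpace ℝ (Fin 2) :=
  (WithLp.equiv 2 (Fin 2 → ℝ)).symm ![v 1, -v 0]

lemma norm_perp (v : EuclideanSpace ℝ (Fin 2)) : ‖perp v‖ = ‖v‖ := by
  simp only [perp, EuclideanSpace.norm_eq, Fin.sum_univ_two, WithLp.equiv_symm_apply, PiLp.toLp_apply]
  simp [add_comm]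

/-- Kernel estimate: for `α ∈ (0,1)`, `|x'| = R > 0`, `|y'| ≤ R/2`, there is `C > 0`
(independent of `x', y', R`) with
`|(x'·y'^⊥)/|x'| · (|x'|^{α+2} - |x'-y'|^{α+2})/(|x'-y'|^{α+2}|x'|^{α+2})| ≤ C|y'|²/R^{α+3}`. -/
theorem stmt1 (α : ℝ) (hα : α ∈ Ioo (0:ℝ) 1) :
    ∃ C > 0, ∀ (x' y' : EuclideanSpace ℝ (Fin 2)) (R : ℝ), 0 < R → ‖x'‖ = R → ‖y'‖ ≤ R / 2 →
      abs ((inner ℝ x' (perp y') : ℝ) / ‖x'‖ *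
          ((‖x'‖ ^ (α + 2) - ‖x' - y'‖ ^ (α + 2)) / (‖x' - y'‖ ^ (α + 2) * ‖x'‖ ^ (α + 2)))) ≤
        C * ‖y'‖ ^ 2 / R ^ (α + 3) := by
  obtain ⟨hα0, hα1⟩ := hα
  refine ⟨(α + 2) * (3/2 : ℝ) ^ (α + 1) * 2 ^ (α + 2), by positivity, ?_⟩
  intro x' y' R hR hx hy
  set A := ‖x'‖ with hAdef
  set B := ‖x' - y'‖ with hBdef
  have hB1 : R / 2 ≤ B := by
    have := norm_sub_norm_le x' y'
    simp only [← hAdef, ← hBdef] at this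
    linarith
  have hB2 : B ≤ 3/2 * R := by
    have := norm_sub_le x' y'
    simp only [← hAdef, ← hBdef] at this
    linarith
  have hBpos : 0 < B := by linarith
  have hdiff : |A - B| ≤ ‖y'‖ := by
    have := abs_norm_sub_norm_le x' (x' - y')
    simpa using this
  have hp : (1:ℝ) ≤ α + 2 := by linarith
  have hnum : |A ^ (α+2) - B ^ (α+2)| ≤ (α+2) * (3/2*R) ^ (α+1) * ‖y'‖ := by
    have := abs_rpow_sub_rpow_le (M := 3/2*R) hp (norm_nonneg x') (norm_nonneg _)
      (by rw [← hAdef, hx]; linarith) hB2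
    rw [show (α+2) - 1 = α + 1 by ring] at this
    calc |A ^ (α+2) - B ^ (α+2)| ≤ (α+2) * (3/2*R) ^ (α+1) * |A - B| := this
      _ ≤ (α+2) * (3/2*R) ^ (α+1) * ‖y'‖ := by gcongr
  have hinner : |(inner ℝ x' (perp y') : ℝ)| ≤ R * ‖y'‖ := by
    have := abs_real_inner_le_norm x' (perp y')
    rwa [norm_perp, hAdef.symm.trans hx] at this
  have hBp : 0 < B ^ (α+2) := Real.rpow_pos_of_pos hBpos _
  have hAp : 0 < A ^ (α+2) := by rw [hx]; exact Real.rpow_pos_of_pos hR _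
  have hBplo : (R/2) ^ (α+2) ≤ B ^ (α+2) := Real.rpow_le_rpow (by linarith) hB1 (by linarith)
  rw [abs_mul, abs_div, abs_div, abs_mul, abs_of_pos (by rw [hx]; exact hR : (0:ℝ) < A),
    abs_of_pos hBp, abs_of_pos hAp]
  have step : |(inner ℝ x' (perp y') : ℝ)| / A * (|A ^ (α+2) - B ^ (α+2)| / (B ^ (α+2) * A ^ (α+2)))
      ≤ (R * ‖y'‖) / R * (((α+2) * (3/2*R) ^ (α+1) * ‖y'‖) / ((R/2) ^ (α+2) * R ^ (α+2))) := by
    gcongr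
    all_goals exact hx.ge
  refine step.trans (le_of_eq ?_)
  have e1 : ((3:ℝ)/2*R) ^ (α+1) = (3/2:ℝ)^(α+1) * R^(α+1) := Real.mul_rpow (by norm_num) hR.le
  have e2 : ((R:ℝ)/2) ^ (α+2) = R^(α+2) / 2^(α+2) :=
    Real.div_rpow hR.le (by norm_num : (0:ℝ) ≤ 2) (α+2)
  have e3 : (R:ℝ)^(α+2) = R^(α+1) * R := by
    rw [show α+2 = (α+1)+1 by ring, Real.rpow_add_one hR.ne']
  have e4 : (R:ℝ)^(α+3) = R^(α+1) * R * R := by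
    rw [show α+3 = ((α+1)+1)+1 by ring, Real.rpow_add_one hR.ne', Real.rpow_add_one hR.ne']
  have hs : (0:ℝ) < R^(α+1) := Real.rpow_pos_of_pos hR _
  have h2 : (0:ℝ) < 2^(α+2) := Real.rpow_pos_of_pos (by norm_num) _
  rw [e1, e2, e3, e4]
  field_simp
end

section
/- Let F : ℝ² × [0,∞) → ℝ² satisfy ‖F‖_∞ < ∞ and |F(x,t)-F(y,t)| ≤ D_t|x-y|, let θ(·,t) be a probability density with center B(t) and moment of inertia I(t), and let W_h be a radial cutoff with |∇W_h| ≤ C₃/h supported in {h ≤ |x| ≤ 2h}. Then |∫ dx ∇W_h(x - B(t)) · ∫ dy [F(x,t) - F(y,t)] θ(y,t) θ(x,t)| ≤ (2 C₃ ‖F‖_∞ I(t)/h³) m(h) + 3 C₃ D_t m(h), where m(h) = ∫_{|x-B(t)|>h} θ(x,t) dx. -/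
open Real Set MeasureTheory

/-- Estimate of the term `H₄` in Lemma 2.3: with a bounded Lipschitz field `F`, a probability
density `θ` with center `B` and moment of inertia `I`, and a cutoff `W` whose gradient is
bounded by `C₃/h` and supported in the annulus `{h ≤ |x| ≤ 2h}`,
`|∫∫ ∇W(x-B)·[F(x)-F(y)] θ(x)θ(y)| ≤ (2C₃ ‖F‖_∞ I/h³) m(h) + 3C₃ D m(h)`. -/
theorem stmt15 (C₃ CF D h : ℝ) (hC₃ : 0 < C₃) (hCF : 0 < CF) (hD : 0 ≤ D) (hh : 0 < h)
    (F : EuclideanSpace ℝ (Fin 2) → EuclideanSpace ℝ (Fin 2))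
    (hFbd : ∀ x, ‖F x‖ ≤ CF)
    (hFLip : ∀ x y : EuclideanSpace ℝ (Fin 2), ‖F x - F y‖ ≤ D * ‖x - y‖)
    (W : EuclideanSpace ℝ (Fin 2) → ℝ) (hW : ContDiff ℝ 1 W)
    (hgrad : ∀ x, ‖gradient W x‖ ≤ C₃ / h)
    (hsupp : ∀ x : EuclideanSpace ℝ (Fin 2), (‖x‖ < h ∨ 2 * h < ‖x‖) → gradient W x = 0)
    (θ : EuclideanSpace ℝ (Fin 2) → ℝ) (hθint : Integrable θ) (hθpos : ∀ x, 0 ≤ θ x)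
    (hθmass : (∫ x, θ x) = 1)
    (B : EuclideanSpace ℝ (Fin 2)) (hB : B = ∫ x, θ x • x)
    (I : ℝ) (hI : I = ∫ x, ‖x - B‖ ^ 2 * θ x)
    (hI2 : Integrable fun x => ‖x - B‖ ^ 2 * θ x) :
    abs (∫ x, ∫ y, θ x * θ y * (inner ℝ (gradient W (x - B)) (F x - F y) : ℝ)) ≤
      2 * C₃ * CF * I / h ^ 3 * (∫ x in {x | h < ‖x - B‖}, θ x) +
        3 * C₃ * D * (∫ x in {x | h < ‖x - B‖}, θ x) := by
  set K : Set (EuclideanSpace ℝ (Fin 2)) := {x | h ≤ ‖x - B‖} with hKdef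
  set S : Set (EuclideanSpace ℝ (Fin 2)) := {x | h < ‖x - B‖} with hSdef
  have hKclosed : IsClosed K := isClosed_le continuous_const ((continuous_id.sub continuous_const).norm)
  have hKmeas : MeasurableSet K := hKclosed.measurableSet
  have hSopen : IsOpen S := isOpen_lt continuous_const ((continuous_id.sub continuous_const).norm)
  -- the two set integrals agree (the sphere is null)
  have hKS : (∫ x in K, θ x) = ∫ x in S, θ x := by
    apply setIntegral_congr_set
    rw [MeasureTheory.ae_eq_set]
    constructor
    · refine measure_mono_null ?_ (MeasureTheory.Measure.addHaar_sphere volume B h)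
      intro x hx
      have h1 : h ≤ ‖x - B‖ := hx.1
      have h2 : ¬ h < ‖x - B‖ := hx.2
      have : ‖x - B‖ = h := le_antisymm (not_lt.1 h2) h1
      simpa [Metric.mem_sphere, dist_eq_norm] using this
    · have hsub : S ⊆ K := by
        intro x hx
        simp only [hSdef, hKdef, mem_setOf_eq] at *
        exact hx.le
      simp [diff_eq_empty.2 hsub]
  set ψ : EuclideanSpace ℝ (Fin 2) → ℝ :=
    fun y => if h ≤ ‖y - B‖ then 2 * CF * (C₃ / h) else 3 * D * C₃ with hψdef
  have hψnn : ∀ y, 0 ≤ ψ y := by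
    intro y; simp only [hψdef]; split <;> positivity
  have hψbd : ∀ y, ‖ψ y‖ ≤ max (2 * CF * (C₃ / h)) (3 * D * C₃) := by
    intro y
    rw [Real.norm_eq_abs, abs_of_nonneg (hψnn y)]
    simp only [hψdef]; split
    · exact le_max_left _ _
    · exact le_max_right _ _
  have hψmeas : Measurable ψ := Measurable.ite hKmeas measurable_const measurable_const
  have hψθ : Integrable (fun y => ψ y * θ y) :=
    hθint.bdd_mul hψmeas.aestronglyMeasurable (Filter.Eventually.of_forall hψbd)
  set A : ℝ := ∫ y, ψ y * θ y with hAdef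
  -- bound on A
  have hA' : A ≤ 2 * CF * (C₃ / h) * (I / h ^ 2) + 3 * D * C₃ := by
    have hle : ∀ y, ψ y * θ y ≤
        2 * CF * C₃ / h ^ 3 * (‖y - B‖ ^ 2 * θ y) + 3 * D * C₃ * θ y := by
      intro y
      have hθy := hθpos y
      simp only [hψdef]
      split
      · rename_i hy
        have key : 2 * CF * (C₃ / h) ≤ 2 * CF * C₃ / h ^ 3 * ‖y - B‖ ^ 2 := by
          rw [← mul_div_assoc, div_mul_eq_mul_div, div_le_div_iff₀ hh (by positivity)]
          nlinarith [mul_le_mul_of_nonneg_left (mul_le_mul hy hy hh.le (norm_nonneg (y - B))) (by positivity : (0:ℝ) ≤ 2 * CF * C₃ * h)]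
        nlinarith [mul_le_mul_of_nonneg_right key hθy, mul_nonneg (mul_nonneg (mul_nonneg (by norm_num : (0:ℝ) ≤ 3) hD) hC₃.le) hθy]
      · have : 0 ≤ 2 * CF * C₃ / h ^ 3 * (‖y - B‖ ^ 2 * θ y) := by positivity
        nlinarith
    have hint : Integrable (fun y =>
        2 * CF * C₃ / h ^ 3 * (‖y - B‖ ^ 2 * θ y) + 3 * D * C₃ * θ y) :=
      (hI2.const_mul _).add (hθint.const_mul _)
    calc A ≤ ∫ y, (2 * CF * C₃ / h ^ 3 * (‖y - B‖ ^ 2 * θ y) + 3 * D * C₃ * θ y) := by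
          apply integral_mono_of_nonneg
          · exact Filter.Eventually.of_forall fun y => mul_nonneg (hψnn y) (hθpos y)
          · exact hint
          · exact Filter.Eventually.of_forall hle
      _ = 2 * CF * C₃ / h ^ 3 * I + 3 * D * C₃ * 1 := by
          rw [integral_add (hI2.const_mul _) (hθint.const_mul _),
            integral_const_mul, integral_const_mul, ← hI, hθmass]
      _ = 2 * CF * (C₃ / h) * (I / h ^ 2) + 3 * D * C₃ := by
          field_simp
  -- pointwise inner bound
  have hinner : ∀ x y, |θ x * θ y * (inner ℝ (gradient W (x - B)) (F x - F y) : ℝ)| ≤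
      θ x * (ψ y * θ y) := by
    intro x y
    have hkey : |(inner ℝ (gradient W (x - B)) (F x - F y) : ℝ)| ≤ ψ y := by
      by_cases hg0 : gradient W (x - B) = 0
      · simp [hg0, hψnn y]
      · have hx : ¬ (‖x - B‖ < h ∨ 2 * h < ‖x - B‖) := fun hc => hg0 (hsupp _ hc)
        push_neg at hx
        obtain ⟨hx1, hx2⟩ := hx
        have hbase := abs_real_inner_le_norm (gradient W (x - B)) (F x - F y)
        simp only [hψdef]
        split
        · rename_i hy
          calc |(inner ℝ (gradient W (x - B)) (F x - F y) : ℝ)|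
              ≤ ‖gradient W (x - B)‖ * ‖F x - F y‖ := hbase
            _ ≤ (C₃ / h) * (2 * CF) := by
                apply mul_le_mul (hgrad _) _ (norm_nonneg _) (by positivity)
                calc ‖F x - F y‖ ≤ ‖F x‖ + ‖F y‖ := norm_sub_le _ _
                  _ ≤ CF + CF := add_le_add (hFbd x) (hFbd y)
                  _ = 2 * CF := by ring
            _ = 2 * CF * (C₃ / h) := by ring
        · rename_i hy
          push_neg at hy
          have hxy : ‖x - y‖ ≤ 3 * h := by
            calc ‖x - y‖ = ‖(x - B) - (y - B)‖ := by abel_nf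
              _ ≤ ‖x - B‖ + ‖y - B‖ := norm_sub_le _ _
              _ ≤ 2 * h + h := add_le_add hx2 hy.le
              _ = 3 * h := by ring
          calc |(inner ℝ (gradient W (x - B)) (F x - F y) : ℝ)|
              ≤ ‖gradient W (x - B)‖ * ‖F x - F y‖ := hbase
            _ ≤ (C₃ / h) * (D * (3 * h)) := by
                apply mul_le_mul (hgrad _) _ (norm_nonneg _) (by positivity)
                calc ‖F x - F y‖ ≤ D * ‖x - y‖ := hFLip x y
                  _ ≤ D * (3 * h) := mul_le_mul_of_nonneg_left hxy hD
            _ = 3 * D * C₃ := by field_simp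
    calc |θ x * θ y * (inner ℝ (gradient W (x - B)) (F x - F y) : ℝ)|
        = θ x * θ y * |(inner ℝ (gradient W (x - B)) (F x - F y) : ℝ)| := by
          rw [abs_mul, abs_of_nonneg (mul_nonneg (hθpos x) (hθpos y))]
      _ ≤ θ x * θ y * ψ y := by
          exact mul_le_mul_of_nonneg_left hkey (mul_nonneg (hθpos x) (hθpos y))
      _ = θ x * (ψ y * θ y) := by ring
  -- outer pointwise bound
  set f : EuclideanSpace ℝ (Fin 2) → ℝ :=
    fun x => ∫ y, θ x * θ y * (inner ℝ (gradient W (x - B)) (F x - F y) : ℝ) with hfdef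
  have hΦ : ∀ x, ‖f x‖ ≤ K.indicator (fun x => θ x * A) x := by
    intro x
    by_cases hxK : x ∈ K
    · rw [indicator_of_mem hxK]
      have : ‖f x‖ ≤ ∫ y, θ x * (ψ y * θ y) := by
        apply norm_integral_le_of_norm_le (hψθ.const_mul (θ x))
        exact Filter.Eventually.of_forall fun y => by
          rw [Real.norm_eq_abs]; exact hinner x y
      calc ‖f x‖ ≤ ∫ y, θ x * (ψ y * θ y) := this
        _ = θ x * A := integral_const_mul _ _
    · have hx : ‖x - B‖ < h := not_le.1 hxK
      have hg0 : gradient W (x - B) = 0 := hsupp _ (Or.inl hx)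
      rw [indicator_of_notMem hxK]
      simp only [hfdef, hg0, inner_zero_left, mul_zero, integral_zero, norm_zero, le_refl]
  have hΦint : Integrable (K.indicator (fun x => θ x * A)) :=
    (hθint.mul_const A).indicator hKmeas
  have hmain : |∫ x, f x| ≤ (∫ x in K, θ x) * A := by
    rw [← Real.norm_eq_abs]
    calc ‖∫ x, f x‖ ≤ ∫ x, K.indicator (fun x => θ x * A) x :=
          norm_integral_le_of_norm_le hΦint (Filter.Eventually.of_forall hΦ)
      _ = ∫ x in K, θ x * A := integral_indicator hKmeas
      _ = (∫ x in K, θ x) * A := integral_mul_const _ _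
  have hmnn : 0 ≤ ∫ x in S, θ x :=
    setIntegral_nonneg hSopen.measurableSet fun x _ => hθpos x
  calc |∫ x, f x| ≤ (∫ x in K, θ x) * A := hmain
    _ = (∫ x in S, θ x) * A := by rw [hKS]
    _ ≤ (∫ x in S, θ x) * (2 * CF * (C₃ / h) * (I / h ^ 2) + 3 * D * C₃) :=
        mul_le_mul_of_nonneg_left hA' hmnn
    _ = 2 * C₃ * CF * I / h ^ 3 * (∫ x in S, θ x) + 3 * C₃ * D * (∫ x in S, θ x) := by
        field_simp
end
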